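/- For the learning rates α_t = (H+1)/(H+t) with H ≥ 1 and weights α_t^i = α_i ∏_{j=i+1}^t (1-α_j), for every t ≥ 1 we have max_{1 ≤ i ≤ t} α_t^i ≤ 2H/t and ∑_{i=1}^t (α_t^i)^2 ≤ 2H/t. -/

import Mathlib

open Finset

lemma sum_telescope_aux (f : ℕ → ℝ) :
    ∀ t : ℕ, ∑ i ∈ Icc 1 t, f i * ∏ j ∈ Icc (i+1) t, (1 - f j)
      = 1 - ∏ j ∈ Icc 1 t, (1 - f j) := by
  intro t
  induction t with
  | zero => simp
  | succ n ih =>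
    have h1 : ∀ i ∈ Icc 1 n, f i * ∏ j ∈ Icc (i+1) (n+1), (1 - f j)
        = (f i * ∏ j ∈ Icc (i+1) n, (1 - f j)) * (1 - f (n+1)) := by
      intro i hi
      simp only [Finset.mem_Icc] at hi
      rw [Finset.prod_Icc_succ_top (by omega)]
      ring
    have he : Icc (n+1+1) (n+1) = (∅ : Finset ℕ) := by
      rw [Finset.Icc_eq_empty]; omega
    rw [Finset.sum_Icc_succ_top (by omega : 1 ≤ n+1), he, Finset.prod_empty, mul_one,
      Finset.sum_congr rfl h1, ← Finset.sum_mul, ih,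
      Finset.prod_Icc_succ_top (by omega : 1 ≤ n+1)]
    ring

theorem stmt1 (H : ℕ) (hH : 1 ≤ H)
    (α : ℕ → ℝ) (hα : ∀ t : ℕ, α t = (H + 1) / (H + t))
    (w : ℕ → ℕ → ℝ)
    (hw : ∀ t i : ℕ, w t i = α i * ∏ j ∈ Finset.Icc (i + 1) t, (1 - α j)) :
    ∀ t : ℕ, 1 ≤ t →
      (∀ i ∈ Finset.Icc 1 t, w t i ≤ 2 * H / t) ∧
      ∑ i ∈ Finset.Icc 1 t, (w t i) ^ 2 ≤ 2 * H / t := by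
  intro t ht
  have hH1 : (1:ℝ) ≤ H := by exact_mod_cast hH
  have ht1 : (1:ℝ) ≤ t := by exact_mod_cast ht
  have hα0 : ∀ j : ℕ, 0 ≤ α j := by
    intro j; rw [hα]
    apply div_nonneg <;> positivity
  have hα1 : ∀ j : ℕ, 1 ≤ j → α j ≤ 1 := by
    intro j hj
    have hj1 : (1:ℝ) ≤ j := by exact_mod_cast hj
    rw [hα]
    rw [div_le_one (by linarith)]
    linarith
  have hprodnn : ∀ i : ℕ, 1 ≤ i → 0 ≤ ∏ j ∈ Icc (i+1) t, (1 - α j) := by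
    intro i hi
    apply Finset.prod_nonneg
    intro j hj
    simp only [Finset.mem_Icc] at hj
    have := hα1 j (by omega)
    linarith
  have hwnn : ∀ i : ℕ, 1 ≤ i → 0 ≤ w t i := by
    intro i hi
    rw [hw]
    exact mul_nonneg (hα0 i) (hprodnn i hi)
  have hαt : α t ≤ 2 * H / t := by
    rw [hα, div_le_div_iff₀ (by linarith) (by linarith)]
    nlinarith
  -- monotone step: α i * (1 - α (i+1)) ≤ α (i+1)
  have hstep : ∀ i : ℕ, 1 ≤ i → α i * (1 - α (i+1)) ≤ α (i+1) := by
    intro i hi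
    have hi1 : (1:ℝ) ≤ i := by exact_mod_cast hi
    rw [hα i, hα (i+1)]
    push_cast
    have p1 : (0:ℝ) < H + i := by linarith
    have p2 : (0:ℝ) < H + (i+1) := by linarith
    have hkey : ((H:ℝ)+1)/(H+i) * (1 - ((H:ℝ)+1)/(H+(i+1)))
        = ((H:ℝ)+1)*i / ((H+i)*(H+(i+1))) := by
      field_simp
      ring
    rw [hkey, div_le_div_iff₀ (by positivity) p2]
    nlinarith [mul_pos (mul_pos (show (0:ℝ) < H+1 by linarith) p2)
      (show (0:ℝ) < H by linarith)]
  have key : ∀ k : ℕ, ∀ i : ℕ, 1 ≤ i → i + k = t → w t i ≤ α t := by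
    intro k
    induction k with
    | zero =>
      intro i hi hit
      have : i = t := by omega
      subst this
      rw [hw]
      have he : Icc (i+1) i = (∅ : Finset ℕ) := by
        rw [Finset.Icc_eq_empty]; omega
      rw [he]; simp
    | succ k ih =>
      intro i hi hit
      have hle : w t i ≤ w t (i+1) := by
        rw [hw, hw]
        have hsplit : Icc (i+1) t = insert (i+1) (Icc (i+2) t) := by
          ext x; simp only [Finset.mem_insert, Finset.mem_Icc]; omega
        rw [hsplit, Finset.prod_insert (by simp)]
        rw [← mul_assoc]
        apply mul_le_mul_of_nonneg_right _ (hprodnn (i+1) (by omega))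
        exact hstep i hi
      exact hle.trans (ih (i+1) (by omega) (by omega))
  have hmax : ∀ i ∈ Icc 1 t, w t i ≤ α t := by
    intro i hi
    simp only [Finset.mem_Icc] at hi
    exact key (t - i) i hi.1 (by omega)
  constructor
  · intro i hi
    exact (hmax i hi).trans hαt
  · have hsum : ∑ i ∈ Icc 1 t, w t i = 1 := by
      have h2 : ∑ i ∈ Icc 1 t, w t i = 1 - ∏ j ∈ Icc 1 t, (1 - α j) := by
        rw [Finset.sum_congr rfl (fun i _ => hw t i)]
        exact sum_telescope_aux α t
      have hz : ∏ j ∈ Icc 1 t, (1 - α j) = 0 := by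
        apply Finset.prod_eq_zero (Finset.mem_Icc.mpr ⟨le_refl 1, ht⟩)
        have h1 : α 1 = 1 := by
          rw [hα]; push_cast; rw [div_eq_one_iff_eq (by linarith)]
        rw [h1]; ring
      rw [h2, hz]; ring
    calc ∑ i ∈ Icc 1 t, (w t i)^2 ≤ ∑ i ∈ Icc 1 t, α t * w t i := by
          apply Finset.sum_le_sum
          intro i hi
          rw [sq]
          apply mul_le_mul_of_nonneg_right (hmax i hi)
          exact hwnn i (Finset.mem_Icc.mp hi).1
      _ = α t * ∑ i ∈ Icc 1 t, w t i := by rw [Finset.mul_sum]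
      _ = α t := by rw [hsum, mul_one]
      _ ≤ 2 * H / t := hαt
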